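/- (Weak form of Bézout's theorem.) Let p(x,y) and q(x,y) be nonzero complex polynomials in two variables of total degrees m and n respectively, and suppose gcd{p,q} = 1 (p and q have no nonconstant common factor in ℂ[x,y]). Then the set of common zeros {(x,y) ∈ ℂ² : p(x,y) = 0 and q(x,y) = 0} is finite, of cardinality at most m·n. -/

import Mathlib

open MvPolynomial


variable {σ : Type*} {R : Type*} [CommRing R] [IsDomain R]

lemma bz_hc_top_ne_zero {φ : MvPolynomial σ R} (hφ : φ ≠ 0) :
    homogeneousComponent φ.totalDegree φ ≠ 0 := by
  obtain ⟨d, hd, hdeg⟩ := Finset.exists_mem_eq_sup φ.support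
    (support_nonempty.mpr hφ) (fun s => s.sum fun _ e => e)
  intro h0
  have hdd : d.degree = φ.totalDegree := by
    rw [totalDegree, hdeg, Finsupp.degree]; rfl
  have : coeff d (homogeneousComponent φ.totalDegree φ) = coeff d φ := by
    rw [coeff_homogeneousComponent, if_pos hdd]
  rw [h0, coeff_zero] at this
  exact (mem_support_iff.mp hd) this.symm

lemma bz_totalDegree_mul_eq {a b : MvPolynomial σ R} (ha : a ≠ 0) (hb : b ≠ 0) :
    (a * b).totalDegree = a.totalDegree + b.totalDegree := by
  refine le_antisymm (totalDegree_mul a b) ?_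
  by_contra hlt
  push_neg at hlt
  have hz : homogeneousComponent (a.totalDegree + b.totalDegree) (a * b) = 0 :=
    homogeneousComponent_eq_zero _ _ hlt
  have hmem : ∀ i j : ℕ, homogeneousComponent i a * homogeneousComponent j b ∈
      homogeneousSubmodule σ R (i + j) := fun i j =>
    (mem_homogeneousSubmodule _ _).mpr
      ((homogeneousComponent_isHomogeneous i a).mul (homogeneousComponent_isHomogeneous j b))
  have hab : a * b = ∑ i ∈ Finset.range (a.totalDegree + 1), ∑ j ∈
      Finset.range (b.totalDegree + 1), homogeneousComponent i a * homogeneousComponent j b := by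
    conv_lhs => rw [← sum_homogeneousComponent a, ← sum_homogeneousComponent b]
    rw [Finset.sum_mul_sum]
  have hexp : homogeneousComponent (a.totalDegree + b.totalDegree) (a * b)
      = homogeneousComponent a.totalDegree a * homogeneousComponent b.totalDegree b := by
    rw [hab, map_sum, Finset.sum_eq_single a.totalDegree]
    · rw [map_sum, Finset.sum_eq_single b.totalDegree]
      · rw [homogeneousComponent_of_mem (hmem _ _), if_pos rfl]
      · intro j hj hjne
        rw [homogeneousComponent_of_mem (hmem _ _), if_neg (by omega)]
      · intro h; exact absurd (Finset.self_mem_range_succ _) h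
    · intro i hi hine
      rw [Finset.mem_range] at hi
      rw [map_sum]
      apply Finset.sum_eq_zero
      intro j hj
      rw [Finset.mem_range] at hj
      rw [homogeneousComponent_of_mem (hmem _ _), if_neg (by omega)]
    · intro h; exact absurd (Finset.self_mem_range_succ _) h
  rw [hz] at hexp
  exact (mul_ne_zero (bz_hc_top_ne_zero ha) (bz_hc_top_ne_zero hb)) hexp.symm


lemma bz_finsupp_sum (f : Fin 2 →₀ ℕ) : (f.sum fun _ e => e) = f 0 + f 1 := by
  rw [Finsupp.sum_fintype _ _ (fun _ => rfl), Fin.sum_univ_two]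

noncomputable def bzEquiv (d : ℕ) :
    {n : Fin 2 →₀ ℕ | (n.sum fun _ e => e) ≤ d} ≃
      ((Finset.range (d+1)).sigma (fun a => Finset.range (d+1-a)) : Finset ((_ : ℕ) × ℕ)) where
  toFun x := ⟨⟨x.1 0, x.1 1⟩, by
    have := x.2
    simp only [Set.mem_setOf_eq, bz_finsupp_sum] at this
    simp only [Finset.mem_sigma, Finset.mem_range]
    omega⟩
  invFun y := ⟨Finsupp.equivFunOnFinite.symm ![y.1.1, y.1.2], by
    have := y.2
    simp only [Finset.mem_sigma, Finset.mem_range] at this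
    simp only [Set.mem_setOf_eq, bz_finsupp_sum, Finsupp.coe_equivFunOnFinite_symm]
    simp only [Matrix.cons_val_zero, Matrix.cons_val_one, Matrix.head_cons]
    omega⟩
  left_inv x := by
    apply Subtype.ext
    ext f
    simp only [Finsupp.coe_equivFunOnFinite_symm]
    fin_cases f <;> simp
  right_inv y := by
    ext <;> simp

lemma bz_finrank (d : ℕ) :
    2 * Module.finrank ℂ (restrictTotalDegree (Fin 2) ℂ d) = (d+1)*(d+2) := by
  classical
  have b : Module.Basis ((Finset.range (d+1)).sigma (fun a => Finset.range (d+1-a)) : Finset ((_ : ℕ) × ℕ))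
      ℂ (restrictTotalDegree (Fin 2) ℂ d) :=
    (basisRestrictSupport ℂ _).reindex (bzEquiv d)
  rw [Module.finrank_eq_card_basis b, Fintype.card_coe, Finset.card_sigma]
  simp only [Finset.card_range]
  have h3 : (∑ a ∈ Finset.range (d+1), (d+1-a)) + ∑ a ∈ Finset.range (d+1), a
      = (d+1)*(d+1) := by
    rw [← Finset.sum_add_distrib]
    rw [Finset.sum_congr rfl (fun a ha => by rw [Finset.mem_range] at ha; omega : ∀ a ∈ Finset.range (d+1), d+1-a+a = d+1)]
    simp [Finset.sum_const, mul_comm]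
  have h2 := Finset.sum_range_id_mul_two (d+1)
  simp only [Nat.add_sub_cancel] at h2
  nlinarith [h2, h3]


noncomputable def bzMul (r : MvPolynomial (Fin 2) ℂ) (e f : ℕ) (h : r.totalDegree + e ≤ f) :
    restrictTotalDegree (Fin 2) ℂ e →ₗ[ℂ] restrictTotalDegree (Fin 2) ℂ f :=
  LinearMap.codRestrict _ ((LinearMap.mulLeft ℂ r).comp (Submodule.subtype _))
    (fun c => by
      rw [mem_restrictTotalDegree]
      refine le_trans (totalDegree_mul _ _) (le_trans ?_ h)
      exact add_le_add_right ((mem_restrictTotalDegree _ _ _).mp c.2) _)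

@[simp] lemma bzMul_apply (r : MvPolynomial (Fin 2) ℂ) (e f : ℕ) (h : r.totalDegree + e ≤ f)
    (x : restrictTotalDegree (Fin 2) ℂ e) : (bzMul r e f h x : MvPolynomial (Fin 2) ℂ) = r * x :=
  rfl

lemma bz_aeval_eq_eval (x : Fin 2 → ℂ) (r : MvPolynomial (Fin 2) ℂ) :
    aeval x r = eval x r := by
  exact RingHom.congr_fun (coe_aeval_eq_eval x) r

set_option maxHeartbeats 2000000 in
lemma bz_key (p q : MvPolynomial (Fin 2) ℂ) (hp : p ≠ 0) (hq : q ≠ 0) (m n : ℕ)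
    (hm : p.totalDegree = m) (hn : q.totalDegree = n)
    (hgcd : ∀ d : MvPolynomial (Fin 2) ℂ, d ∣ p → d ∣ q → IsUnit d)
    (k : ℕ) (z : Fin k → ℂ × ℂ) (hzinj : Function.Injective z)
    (hz : ∀ i, eval ![(z i).1, (z i).2] p = 0 ∧ eval ![(z i).1, (z i).2] q = 0) :
    k ≤ m * n := by
  classical
  have hrel : IsRelPrime q p := fun d hdq hdp => hgcd d hdp hdq
  -- the map (a, b) ↦ p * a + q * b
  set φ : (restrictTotalDegree (Fin 2) ℂ (k+n) × restrictTotalDegree (Fin 2) ℂ (k+m)) →ₗ[ℂ]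
      restrictTotalDegree (Fin 2) ℂ (k+m+n) :=
    (bzMul p (k+n) (k+m+n) (by rw [hm]; omega)).coprod
      (bzMul q (k+m) (k+m+n) (by rw [hn]; omega)) with hφ
  -- the map c ↦ (q * c, -(p * c))
  set ψ : restrictTotalDegree (Fin 2) ℂ k →ₗ[ℂ]
      (restrictTotalDegree (Fin 2) ℂ (k+n) × restrictTotalDegree (Fin 2) ℂ (k+m)) :=
    (bzMul q k (k+n) (by rw [hn]; omega)).prod (-(bzMul p k (k+m) (by rw [hm]; omega))) with hψ
  have hψinj : Function.Injective ψ := by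
    intro c c' hcc
    have h1 : q * (c : MvPolynomial (Fin 2) ℂ) = q * (c' : MvPolynomial (Fin 2) ℂ) :=
      congrArg (fun x : (restrictTotalDegree (Fin 2) ℂ (k+n) × restrictTotalDegree (Fin 2) ℂ (k+m))
        => (x.1 : MvPolynomial (Fin 2) ℂ)) hcc
    exact Subtype.ext (mul_left_cancel₀ hq h1)
  have hker : LinearMap.ker φ = LinearMap.range ψ := by
    apply le_antisymm
    · rintro ⟨a, b⟩ hx
      rw [LinearMap.mem_ker] at hx
      have hx' : p * (a : MvPolynomial (Fin 2) ℂ) + q * (b : MvPolynomial (Fin 2) ℂ) = 0 := by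
        simpa [hφ, LinearMap.coprod_apply] using congrArg Subtype.val hx
      have hdvd : q ∣ p * (a : MvPolynomial (Fin 2) ℂ) := ⟨-(b : MvPolynomial (Fin 2) ℂ), by
        rw [mul_neg]; linear_combination hx'⟩
      obtain ⟨c, hc⟩ := hrel.dvd_of_dvd_mul_left hdvd
      have hcd : c.totalDegree ≤ k := by
        rcases eq_or_ne c 0 with rfl | hc0
        · simp
        · have ha0 : (a : MvPolynomial (Fin 2) ℂ) ≠ 0 := by
            rw [hc]; exact mul_ne_zero hq hc0
          have : (a : MvPolynomial (Fin 2) ℂ).totalDegree ≤ k + n :=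
            (mem_restrictTotalDegree _ _ _).mp a.2
          rw [hc, bz_totalDegree_mul_eq hq hc0, hn] at this
          omega
      have hb : (b : MvPolynomial (Fin 2) ℂ) = -(p * c) := by
        have h0 : q * (p * c + (b : MvPolynomial (Fin 2) ℂ)) = 0 := by
          rw [hc] at hx'; ring_nf; linear_combination hx'
        rcases mul_eq_zero.mp h0 with h | h
        · exact absurd h hq
        · linear_combination h
      refine ⟨⟨c, (mem_restrictTotalDegree _ _ _).mpr hcd⟩, ?_⟩
      apply Prod.ext
      · apply Subtype.ext
        simp [hψ, LinearMap.prod_apply, hc]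
      · apply Subtype.ext
        simp [hψ, LinearMap.prod_apply, hb]
    · rintro _ ⟨c, rfl⟩
      rw [LinearMap.mem_ker]
      apply Subtype.ext
      simp [hφ, hψ, LinearMap.coprod_apply, LinearMap.prod_apply]
      ring
  -- evaluation map
  set E : restrictTotalDegree (Fin 2) ℂ (k+m+n) →ₗ[ℂ] (Fin k → ℂ) :=
    LinearMap.pi (fun i => (aeval ![(z i).1, (z i).2]).toLinearMap.comp
      (Submodule.subtype _)) with hE
  have hEapp : ∀ (x : restrictTotalDegree (Fin 2) ℂ (k+m+n)) i,
      E x i = eval ![(z i).1, (z i).2] (x : MvPolynomial (Fin 2) ℂ) := by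
    intro x i
    simp [hE, LinearMap.pi_apply, bz_aeval_eq_eval]
  have hEW : LinearMap.range φ ≤ LinearMap.ker E := by
    rintro _ ⟨⟨a, b⟩, rfl⟩
    rw [LinearMap.mem_ker]
    funext i
    rw [hEapp]
    have : (φ (a, b) : MvPolynomial (Fin 2) ℂ)
        = p * (a : MvPolynomial (Fin 2) ℂ) + q * (b : MvPolynomial (Fin 2) ℂ) := by
      simp [hφ, LinearMap.coprod_apply]
    rw [this, map_add, map_mul, map_mul, (hz i).1, (hz i).2]
    simp
  have hEsurj : LinearMap.range E = ⊤ := by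
    rw [LinearMap.range_eq_top]
    intro w
    set ℓ : Fin k → Fin k → MvPolynomial (Fin 2) ℂ := fun i j =>
      if (z i).1 = (z j).1 then X 1 - C ((z j).2) else X 0 - C ((z j).1) with hℓ
    have hℓdeg : ∀ i j, (ℓ i j).totalDegree ≤ 1 := by
      intro i j
      rw [hℓ]
      dsimp only
      split_ifs <;>
      · rw [sub_eq_add_neg]
        refine le_trans (totalDegree_add _ _) ?_
        simp [totalDegree_X, totalDegree_neg]
    have hℓz : ∀ i j, j ≠ i → eval ![(z j).1, (z j).2] (ℓ i j) = 0 := by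
      intro i j hji
      rw [hℓ]
      dsimp only
      split_ifs <;> simp
    have hℓnz : ∀ i j, j ≠ i → eval ![(z i).1, (z i).2] (ℓ i j) ≠ 0 := by
      intro i j hji
      have hzz : z i ≠ z j := fun h => hji (hzinj h).symm
      rw [hℓ]
      dsimp only
      split_ifs with h
      · simp only [map_sub, eval_X, eval_C, Matrix.cons_val_one, Matrix.head_cons]
        intro h2
        exact hzz (Prod.ext h (sub_eq_zero.mp h2))
      · simp only [map_sub, eval_X, eval_C, Matrix.cons_val_zero]
        intro h2
        exact h (sub_eq_zero.mp h2)
    set v : Fin k → MvPolynomial (Fin 2) ℂ := fun i => ∏ j ∈ Finset.univ.erase i, ℓ i j with hv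
    have hvmem : ∀ i, v i ∈ restrictTotalDegree (Fin 2) ℂ (k+m+n) := by
      intro i
      rw [mem_restrictTotalDegree]
      refine le_trans (totalDegree_finset_prod _ _) ?_
      refine le_trans (Finset.sum_le_sum (fun j _ => hℓdeg i j)) ?_
      simp only [Finset.sum_const, smul_eq_mul, mul_one]
      have := Finset.card_erase_le (a := i) (s := (Finset.univ : Finset (Fin k)))
      simp only [Finset.card_univ, Fintype.card_fin] at this
      omega
    have hv0 : ∀ i j, j ≠ i → eval ![(z j).1, (z j).2] (v i) = 0 := by
      intro i j hji
      rw [hv, map_prod]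
      exact Finset.prod_eq_zero (Finset.mem_erase.mpr ⟨hji, Finset.mem_univ j⟩) (hℓz i j hji)
    have hvi : ∀ i, eval ![(z i).1, (z i).2] (v i) ≠ 0 := by
      intro i
      rw [hv, map_prod]
      rw [Finset.prod_ne_zero_iff]
      intro j hj
      exact hℓnz i j (Finset.mem_erase.mp hj).1
    refine ⟨∑ i, (w i / eval ![(z i).1, (z i).2] (v i)) • ⟨v i, hvmem i⟩, ?_⟩
    funext j
    rw [map_sum]
    simp only [Finset.sum_apply, map_smul, Pi.smul_apply, smul_eq_mul]
    rw [Finset.sum_eq_single j]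
    · rw [hEapp]
      exact div_mul_cancel₀ _ (hvi j)
    · intro i _ hij
      rw [hEapp]
      simp only []
      rw [hv0 i j (Ne.symm hij)]
      ring
    · intro h; exact absurd (Finset.mem_univ j) h
  -- dimension count
  have h1 : Module.finrank ℂ (LinearMap.range E) + Module.finrank ℂ (LinearMap.ker E)
      = Module.finrank ℂ (restrictTotalDegree (Fin 2) ℂ (k+m+n)) := LinearMap.finrank_range_add_finrank_ker E
  have h2 : Module.finrank ℂ (LinearMap.range E) = k := by
    rw [hEsurj, finrank_top, Module.finrank_fin_fun]
  have h3 : Module.finrank ℂ (LinearMap.range φ) + Module.finrank ℂ (LinearMap.ker φ)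
      = Module.finrank ℂ (restrictTotalDegree (Fin 2) ℂ (k+n)) + Module.finrank ℂ (restrictTotalDegree (Fin 2) ℂ (k+m)) :=
    (LinearMap.finrank_range_add_finrank_ker φ).trans Module.finrank_prod
  have h4 : Module.finrank ℂ (LinearMap.ker φ)
      = Module.finrank ℂ (restrictTotalDegree (Fin 2) ℂ k) := by
    rw [hker]; exact LinearMap.finrank_range_of_inj hψinj
  have h5 : Module.finrank ℂ (LinearMap.range φ) ≤ Module.finrank ℂ (LinearMap.ker E) :=
    Submodule.finrank_mono hEW
  have hfinal : k + (Module.finrank ℂ (restrictTotalDegree (Fin 2) ℂ (k+n)) + Module.finrank ℂ (restrictTotalDegree (Fin 2) ℂ (k+m))) ≤ Module.finrank ℂ (restrictTotalDegree (Fin 2) ℂ (k+m+n)) + Module.finrank ℂ (restrictTotalDegree (Fin 2) ℂ k) := by omega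
  have e1 := bz_finrank (k+n)
  have e2 := bz_finrank (k+m)
  have e3 := bz_finrank k
  have e4 := bz_finrank (k+m+n)
  nlinarith [hfinal, e1, e2, e3, e4]

/-- Weak form of Bézout's theorem: if `p`, `q` are nonzero complex polynomials in two
variables of total degrees `m`, `n` with no nonconstant common factor, then their set
of common zeros in `ℂ²` is finite, of cardinality at most `m * n`. -/
theorem bezout_weak (p q : MvPolynomial (Fin 2) ℂ) (hp : p ≠ 0) (hq : q ≠ 0)
    (m n : ℕ) (hm : p.totalDegree = m) (hn : q.totalDegree = n)
    (hgcd : ∀ d : MvPolynomial (Fin 2) ℂ, d ∣ p → d ∣ q → IsUnit d) :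
    {z : ℂ × ℂ | MvPolynomial.eval ![z.1, z.2] p = 0 ∧
        MvPolynomial.eval ![z.1, z.2] q = 0}.Finite ∧
      {z : ℂ × ℂ | MvPolynomial.eval ![z.1, z.2] p = 0 ∧
        MvPolynomial.eval ![z.1, z.2] q = 0}.ncard ≤ m * n := by
  set S := {z : ℂ × ℂ | MvPolynomial.eval ![z.1, z.2] p = 0 ∧
      MvPolynomial.eval ![z.1, z.2] q = 0} with hS
  have key2 : ∀ F : Finset (ℂ × ℂ), ↑F ⊆ S → F.card ≤ m * n := by
    intro F hF
    refine bz_key p q hp hq m n hm hn hgcd F.card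
      (fun i => (F.equivFin.symm i : ℂ × ℂ))
      (fun i j hij => F.equivFin.symm.injective (Subtype.coe_injective hij))
      (fun i => hF (Finset.mem_coe.mpr (F.equivFin.symm i).2))
  have hfin : S.Finite := by
    by_contra hinf
    obtain ⟨t, hts, htf, hcard⟩ := Set.Infinite.exists_subset_ncard_eq hinf (m*n+1)
    have h1 := key2 htf.toFinset (by rwa [Set.Finite.coe_toFinset])
    rw [← Set.ncard_eq_toFinset_card t htf, hcard] at h1
    omega
  refine ⟨hfin, ?_⟩
  rw [Set.ncard_eq_toFinset_card S hfin]
  exact key2 hfin.toFinset (by rw [Set.Finite.coe_toFinset])
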